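/- Let A = (uvᵀ) ∘ H where u, v are unit vectors in ℝ^K, H is a K×K real matrix with all entries bounded by 1 in absolute value, and ∘ denotes the entrywise (Hadamard) product. Let Σ be a positive semidefinite 2K×2K matrix with K×K blocks Σ₁₁, Σ₁₂, Σ₂₁, Σ₂₂, and set B = Σ^{1/2} M Σ^{1/2} where M is the 2K×2K matrix with zero diagonal blocks and off-diagonal blocks A and Aᵀ. Then tr(B²) ≤ 2‖Σ₁₂^{abs}‖_op² + 2‖Σ₁₁^{abs}‖_op ‖Σ₂₂^{abs}‖_op, where C^{abs} denotes the matrix of absolute values of entries of C. -/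

import Mathlib

open Matrix

/-- The spectral (ℓ²→ℓ²) operator norm of a square real matrix. -/
noncomputable def opNorm {n : Type*} [Fintype n] [DecidableEq n]
    (A : Matrix n n ℝ) : ℝ :=
  ‖Matrix.toEuclideanCLM (𝕜 := ℝ) A‖

/-- The square root of a positive semidefinite matrix, as defined in the older Mathlib
(`Matrix.PosSemidef.sqrt`, since removed). -/
noncomputable def Matrix.PosSemidef.sqrt {n 𝕜 : Type*} [Fintype n] [DecidableEq n] [RCLike 𝕜]
    [PartialOrder 𝕜] [StarOrderedRing 𝕜]
    {A : Matrix n n 𝕜} (hA : A.PosSemidef) : Matrix n n 𝕜 :=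
  hA.1.eigenvectorUnitary.1 * diagonal ((↑) ∘ (√·) ∘ hA.1.eigenvalues) *
    (star hA.1.eigenvectorUnitary : Matrix n n 𝕜)

lemma psd_sqrt_mul_self_real {n : Type*} [Fintype n] [DecidableEq n]
    {A : Matrix n n ℝ} (hA : A.PosSemidef) : hA.sqrt * hA.sqrt = A := by
  have hU : (star hA.1.eigenvectorUnitary : Matrix n n ℝ) * hA.1.eigenvectorUnitary.1 = 1 :=
    Unitary.coe_star_mul_self _
  unfold Matrix.PosSemidef.sqrt
  conv_rhs => rw [hA.1.spectral_theorem, Unitary.conjStarAlgAut_apply]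
  rw [show ∀ a b c d e f : Matrix n n ℝ, a * b * c * (d * e * f) = a * (b * (c * d) * e) * f by
    intros; noncomm_ring]
  rw [hU, Matrix.mul_one, diagonal_mul_diagonal]
  congr 2
  congr 1
  funext i
  simp [Real.mul_self_sqrt (hA.eigenvalues_nonneg i)]

lemma bil_le_opNorm {K : ℕ} (C : Matrix (Fin K) (Fin K) ℝ) (x y : Fin K → ℝ)
    (hx : ∑ i, x i ^ 2 = 1) (hy : ∑ i, y i ^ 2 = 1) :
    ∑ i, ∑ j, x i * C i j * y j ≤ opNorm C := by
  set x' : EuclideanSpace ℝ (Fin K) := (WithLp.equiv 2 _).symm x with hx'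
  set y' : EuclideanSpace ℝ (Fin K) := (WithLp.equiv 2 _).symm y with hy'
  have hnx : ‖x'‖ = 1 := by
    rw [EuclideanSpace.norm_eq]
    simp only [hx', WithLp.equiv_symm_apply, PiLp.toLp_apply, Real.norm_eq_abs, sq_abs]
    rw [hx]; exact Real.sqrt_one
  have hny : ‖y'‖ = 1 := by
    rw [EuclideanSpace.norm_eq]
    simp only [hy', WithLp.equiv_symm_apply, PiLp.toLp_apply, Real.norm_eq_abs, sq_abs]
    rw [hy]; exact Real.sqrt_one
  have key : ∑ i, ∑ j, x i * C i j * y j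
      = @inner ℝ _ _ x' (Matrix.toEuclideanCLM (𝕜 := ℝ) C y') := by
    rw [hy', WithLp.equiv_symm_apply, Matrix.toEuclideanCLM_toLp]
    rw [PiLp.inner_apply]
    simp only [WithLp.equiv_symm_apply, PiLp.toLp_apply, RCLike.inner_apply, conj_trivial]
    refine Finset.sum_congr rfl fun i _ => ?_
    simp only [hx', WithLp.equiv_symm_apply, PiLp.toLp_apply, Matrix.toLin'_apply, Matrix.mulVec,
      dotProduct, Finset.mul_sum]
    rw [mul_comm _ (x i), Finset.mul_sum]
    exact Finset.sum_congr rfl fun j _ => by ring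
  rw [key]
  calc @inner ℝ _ _ x' (Matrix.toEuclideanCLM (𝕜 := ℝ) C y')
      ≤ ‖x'‖ * ‖Matrix.toEuclideanCLM (𝕜 := ℝ) C y'‖ := real_inner_le_norm _ _
    _ ≤ ‖x'‖ * (‖Matrix.toEuclideanCLM (𝕜 := ℝ) C‖ * ‖y'‖) :=
        mul_le_mul_of_nonneg_left ((Matrix.toEuclideanCLM (𝕜 := ℝ) C).le_opNorm y')
          (norm_nonneg _)
    _ = opNorm C := by rw [hnx, hny, opNorm]; ring

lemma trace_mul_eq {K : ℕ} (P Q : Matrix (Fin K) (Fin K) ℝ) :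
    (P * Q).trace = ∑ i, ∑ j, P i j * Q j i := by
  simp [Matrix.trace, Matrix.mul_apply, Matrix.diag]

lemma trace_prod_le {K : ℕ} (P Q : Matrix (Fin K) (Fin K) ℝ) (a b c d : Fin K → ℝ)
    (hP : ∀ i j, |P i j| ≤ a i * b j) (hQ : ∀ i j, |Q i j| ≤ c i * d j) :
    (P * Q).trace ≤ (∑ i, a i * d i) * (∑ j, b j * c j) := by
  rw [trace_mul_eq, Finset.sum_mul_sum]
  refine Finset.sum_le_sum fun i _ => Finset.sum_le_sum fun j _ => ?_
  calc P i j * Q j i ≤ |P i j * Q j i| := le_abs_self _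
    _ = |P i j| * |Q j i| := abs_mul _ _
    _ ≤ (a i * b j) * (c j * d i) :=
        mul_le_mul (hP i j) (hQ j i) (abs_nonneg _) (le_trans (abs_nonneg _) (hP i j))
    _ = a i * d i * (b j * c j) := by ring

lemma trace_fromBlocks' {K : ℕ} (P Q R S : Matrix (Fin K) (Fin K) ℝ) :
    (Matrix.fromBlocks P Q R S).trace = P.trace + S.trace := by
  simp [Matrix.trace, Fintype.sum_sum_type, Matrix.diag]

lemma entry_bound {K : ℕ} (C P : Matrix (Fin K) (Fin K) ℝ) (a b : Fin K → ℝ)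
    (hP : ∀ i j, |P i j| ≤ a i * b j) (i j : Fin K) :
    |(C * P) i j| ≤ (∑ k, |C i k| * a k) * b j := by
  rw [Matrix.mul_apply]
  calc |∑ k, C i k * P k j| ≤ ∑ k, |C i k * P k j| := Finset.abs_sum_le_sum_abs _ _
    _ ≤ ∑ k, |C i k| * (a k * b j) := Finset.sum_le_sum fun k _ => by
        rw [abs_mul]; exact mul_le_mul_of_nonneg_left (hP k j) (abs_nonneg _)
    _ = (∑ k, |C i k| * a k) * b j := by
        rw [Finset.sum_mul]; exact Finset.sum_congr rfl fun k _ => by ring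

set_option maxHeartbeats 1000000 in
theorem trace_sq_bound
    {K : ℕ} (u v : Fin K → ℝ) (hu : ∑ i, u i ^ 2 = 1) (hv : ∑ i, v i ^ 2 = 1)
    (H : Matrix (Fin K) (Fin K) ℝ) (hH : ∀ k l, |H k l| ≤ 1)
    (S11 S12 S21 S22 : Matrix (Fin K) (Fin K) ℝ)
    (hS : (Matrix.fromBlocks S11 S12 S21 S22).PosSemidef)
    (A : Matrix (Fin K) (Fin K) ℝ) (hA : A = Matrix.of fun i j => u i * v j * H i j)
    (B : Matrix (Fin K ⊕ Fin K) (Fin K ⊕ Fin K) ℝ)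
    (hB : B = hS.sqrt * Matrix.fromBlocks 0 A Aᵀ 0 * hS.sqrt) :
    (B * B).trace ≤
      2 * opNorm (S12.map (fun x : ℝ => |x|)) ^ 2 + 2 * opNorm (S11.map (fun x : ℝ => |x|)) * opNorm (S22.map (fun x : ℝ => |x|)) := by
  set x : Fin K → ℝ := fun i => |u i| with hxdef
  set y : Fin K → ℝ := fun i => |v i| with hydef
  have hx0 : ∀ i, 0 ≤ x i := fun i => abs_nonneg _
  have hy0 : ∀ i, 0 ≤ y i := fun i => abs_nonneg _
  have hx2 : ∑ i, x i ^ 2 = 1 := by simpa [hxdef, sq_abs] using hu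
  have hy2 : ∑ i, y i ^ 2 = 1 := by simpa [hydef, sq_abs] using hv
  have hAb : ∀ i j, |A i j| ≤ x i * y j := by
    intro i j
    rw [hA]
    simp only [Matrix.of_apply]
    calc |u i * v j * H i j| = |u i| * |v j| * |H i j| := by rw [abs_mul, abs_mul]
      _ ≤ |u i| * |v j| * 1 :=
          mul_le_mul_of_nonneg_left (hH i j) (mul_nonneg (abs_nonneg _) (abs_nonneg _))
      _ = x i * y j := by rw [mul_one]
  have hATb : ∀ i j, |Aᵀ i j| ≤ y i * x j := by
    intro i j
    rw [Matrix.transpose_apply]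
    calc |A j i| ≤ x j * y i := hAb j i
      _ = y i * x j := mul_comm _ _
  -- S21 = S12ᵀ
  have hS21 : S21 = S12ᵀ := by
    ext i j
    have h := congrFun (congrFun hS.1 (Sum.inr i)) (Sum.inl j)
    simpa using h.symm
  set M0 : Matrix (Fin K ⊕ Fin K) (Fin K ⊕ Fin K) ℝ := Matrix.fromBlocks 0 A Aᵀ 0 with hM0
  set Sig0 : Matrix (Fin K ⊕ Fin K) (Fin K ⊕ Fin K) ℝ := Matrix.fromBlocks S11 S12 S21 S22
    with hSig0
  have hsq : hS.sqrt * hS.sqrt = Sig0 := psd_sqrt_mul_self_real hS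
  have h1 : (B * B).trace = ((Sig0 * M0) * (Sig0 * M0)).trace := by
    rw [hB]
    have e : (hS.sqrt * M0 * hS.sqrt) * (hS.sqrt * M0 * hS.sqrt)
        = hS.sqrt * (M0 * (hS.sqrt * hS.sqrt) * M0) * hS.sqrt := by noncomm_ring
    rw [e, hsq, Matrix.trace_mul_cycle, ← Matrix.mul_assoc, hsq]
    congr 1
    noncomm_ring
  have hSigM : Sig0 * M0 = Matrix.fromBlocks (S12 * Aᵀ) (S11 * A) (S22 * Aᵀ) (S21 * A) := by
    rw [hSig0, hM0, Matrix.fromBlocks_multiply]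
    simp
  have h2 : (B * B).trace
      = ((S12 * Aᵀ) * (S12 * Aᵀ)).trace + 2 * ((S11 * A) * (S22 * Aᵀ)).trace
        + ((S21 * A) * (S21 * A)).trace := by
    rw [h1, hSigM, Matrix.fromBlocks_multiply, trace_fromBlocks', Matrix.trace_add,
      Matrix.trace_add, Matrix.trace_mul_comm (S22 * Aᵀ) (S11 * A)]
    ring
  -- bounding quantities
  set w : Fin K → ℝ := fun i => ∑ k, |S12 i k| * y k with hwdef
  set z : Fin K → ℝ := fun i => ∑ k, |S12ᵀ i k| * x k with hzdef
  set r' : Fin K → ℝ := fun i => ∑ k, |S11 i k| * x k with hr'def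
  set t' : Fin K → ℝ := fun i => ∑ k, |S22 i k| * y k with ht'def
  set s : ℝ := ∑ i, w i * x i with hsdef
  set r : ℝ := ∑ i, r' i * x i with hrdef
  set t : ℝ := ∑ i, t' i * y i with htdef
  have hs0 : 0 ≤ s := Finset.sum_nonneg fun i _ =>
    mul_nonneg (Finset.sum_nonneg fun k _ => mul_nonneg (abs_nonneg _) (hy0 k)) (hx0 i)
  have hr0 : 0 ≤ r := Finset.sum_nonneg fun i _ =>
    mul_nonneg (Finset.sum_nonneg fun k _ => mul_nonneg (abs_nonneg _) (hx0 k)) (hx0 i)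
  have ht0 : 0 ≤ t := Finset.sum_nonneg fun i _ =>
    mul_nonneg (Finset.sum_nonneg fun k _ => mul_nonneg (abs_nonneg _) (hy0 k)) (hy0 i)
  -- s ≤ opNorm |S12|, etc.
  have hsle : s ≤ opNorm (S12.map (fun x : ℝ => |x|)) := by
    have := bil_le_opNorm (S12.map (fun x : ℝ => |x|)) x y hx2 hy2
    refine le_trans (le_of_eq ?_) this
    rw [hsdef]
    refine Finset.sum_congr rfl fun i _ => ?_
    rw [hwdef]
    simp only [Matrix.map_apply, Finset.sum_mul]
    exact Finset.sum_congr rfl fun k _ => by ring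
  have hrle : r ≤ opNorm (S11.map (fun x : ℝ => |x|)) := by
    have := bil_le_opNorm (S11.map (fun x : ℝ => |x|)) x x hx2 hx2
    refine le_trans (le_of_eq ?_) this
    rw [hrdef]
    refine Finset.sum_congr rfl fun i _ => ?_
    rw [hr'def]
    simp only [Matrix.map_apply, Finset.sum_mul]
    exact Finset.sum_congr rfl fun k _ => by ring
  have htle : t ≤ opNorm (S22.map (fun x : ℝ => |x|)) := by
    have := bil_le_opNorm (S22.map (fun x : ℝ => |x|)) y y hy2 hy2
    refine le_trans (le_of_eq ?_) this
    rw [htdef]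
    refine Finset.sum_congr rfl fun i _ => ?_
    rw [ht'def]
    simp only [Matrix.map_apply, Finset.sum_mul]
    exact Finset.sum_congr rfl fun k _ => by ring
  -- entrywise bounds on the four products
  have hP1 : ∀ i j, |(S12 * Aᵀ) i j| ≤ w i * x j := fun i j => entry_bound S12 Aᵀ y x hATb i j
  have hP2 : ∀ i j, |(S11 * A) i j| ≤ r' i * y j := fun i j => entry_bound S11 A x y hAb i j
  have hP3 : ∀ i j, |(S22 * Aᵀ) i j| ≤ t' i * x j := fun i j => entry_bound S22 Aᵀ y x hATb i j
  have hP4 : ∀ i j, |(S21 * A) i j| ≤ z i * y j := by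
    intro i j
    rw [hS21]
    exact entry_bound S12ᵀ A x y hAb i j
  -- z·y sum equals s
  have hzy : ∑ i, z i * y i = s := by
    rw [hsdef, hzdef, hwdef]
    simp only [Matrix.transpose_apply, Finset.sum_mul]
    rw [Finset.sum_comm]
    exact Finset.sum_congr rfl fun i _ => Finset.sum_congr rfl fun k _ => by ring
  -- now bound each trace
  have hT1 : ((S12 * Aᵀ) * (S12 * Aᵀ)).trace ≤ s * s := by
    have := trace_prod_le (S12 * Aᵀ) (S12 * Aᵀ) w x w x hP1 hP1
    refine le_trans this (le_of_eq ?_)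
    rw [hsdef]
    congr 1
    exact Finset.sum_congr rfl fun i _ => mul_comm _ _
  have hT4 : ((S21 * A) * (S21 * A)).trace ≤ s * s := by
    have := trace_prod_le (S21 * A) (S21 * A) z y z y hP4 hP4
    refine le_trans this (le_of_eq ?_)
    rw [← hzy]
    congr 1
    exact Finset.sum_congr rfl fun i _ => mul_comm _ _
  have hT2 : ((S11 * A) * (S22 * Aᵀ)).trace ≤ r * t := by
    have := trace_prod_le (S11 * A) (S22 * Aᵀ) r' y t' x hP2 hP3
    refine le_trans this (le_of_eq ?_)
    rw [hrdef, htdef]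
    congr 1
    exact Finset.sum_congr rfl fun i _ => mul_comm _ _
  -- combine
  rw [h2]
  have hfin : s * s ≤ opNorm (S12.map (fun x : ℝ => |x|)) ^ 2 := by
    rw [sq]
    exact mul_le_mul hsle hsle hs0 (le_trans hs0 hsle)
  have hrt : r * t ≤ opNorm (S11.map (fun x : ℝ => |x|)) * opNorm (S22.map (fun x : ℝ => |x|)) :=
    mul_le_mul hrle htle ht0 (le_trans hr0 hrle)
  linarith [hT1, hT2, hT4, hfin, hrt]
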